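/- For σ > 0, the tension spline function G(x) = −(1/(2σ³)) (exp(−σ|x|) + σ|x|) on ℝ satisfies G'''' − σ² G'' = δ_0 in the sense of tempered distributions; that is, for every Schwartz function γ : ℝ → ℝ, ∫_ℝ G(x) (γ''''(x) − σ² γ''(x)) dx = γ(0). -/

import Mathlib

open MeasureTheory Filter Set Topology

namespace TensionAux


lemma tendsto_cocompact (f : SchwartzMap ℝ ℝ) :
    Tendsto (fun x => f x) (cocompact ℝ) (𝓝 0) := f.toZeroAtInfty.zero_at_infty'

lemma tendsto_id_mul (f : SchwartzMap ℝ ℝ) :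
    Tendsto (fun x => x * f x) (cocompact ℝ) (𝓝 0) := by
  obtain ⟨C, hC0, hC⟩ := f.decay 2 0
  simp only [norm_iteratedFDeriv_zero] at hC
  have h1 : Tendsto (fun x : ℝ => C / ‖x‖) (cocompact ℝ) (𝓝 0) :=
    tendsto_const_nhds.div_atTop tendsto_norm_cocompact_atTop
  apply squeeze_zero_norm' _ h1
  filter_upwards [tendsto_norm_cocompact_atTop.eventually_ge_atTop 1] with x hx
  have hx0 : (0:ℝ) < ‖x‖ := lt_of_lt_of_le one_pos hx
  rw [le_div_iff₀ hx0]
  calc ‖x * f x‖ * ‖x‖ = ‖x‖ ^ 2 * ‖f x‖ := by rw [norm_mul]; ring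
    _ ≤ C := hC x

lemma integrable_id_mul (f : SchwartzMap ℝ ℝ) :
    Integrable (fun x : ℝ => ‖x‖ * ‖f x‖) := by
  simpa using f.integrable_pow_mul volume 1

lemma integrableOn_aux (d c₁ c₂ c₃ : ℝ) (f : SchwartzMap ℝ ℝ) {S : Set ℝ}
    (hS : MeasurableSet S) (hb : ∀ x ∈ S, d * x ≤ 0) :
    IntegrableOn (fun x => (c₁ * Real.exp (d * x) + (c₂ * x + c₃)) * f x) S := by
  apply Integrable.mono'
    (((f.integrable.norm.const_mul (|c₁| + |c₃|)).add
      ((integrable_id_mul f).const_mul |c₂|)).restrict (s := S))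
  · exact ((((continuous_const.mul (Real.continuous_exp.comp (continuous_const.mul
      continuous_id))).add ((continuous_const.mul continuous_id).add continuous_const)).mul
      f.continuous)).aestronglyMeasurable.restrict
  · filter_upwards [ae_restrict_mem hS] with x hx
    have he : Real.exp (d * x) ≤ 1 := Real.exp_le_one_iff.mpr (hb x hx)
    have he0 : 0 < Real.exp (d * x) := Real.exp_pos _
    have h1 : |c₁ * Real.exp (d * x) + (c₂ * x + c₃)| ≤ (|c₁| + |c₃|) + |c₂| * ‖x‖ := by
      refine (abs_add_le _ _).trans ?_
      have h2 : |c₁ * Real.exp (d * x)| ≤ |c₁| := by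
        rw [abs_mul, Real.abs_exp]
        nlinarith [abs_nonneg c₁]
      have h3 : |c₂ * x + c₃| ≤ |c₂| * |x| + |c₃| :=
        (abs_add_le _ _).trans_eq (by rw [abs_mul])
      rw [Real.norm_eq_abs]
      linarith
    rw [norm_mul]
    calc ‖c₁ * Real.exp (d * x) + (c₂ * x + c₃)‖ * ‖f x‖
        ≤ ((|c₁| + |c₃|) + |c₂| * ‖x‖) * ‖f x‖ :=
          mul_le_mul_of_nonneg_right h1 (norm_nonneg _)
      _ = (|c₁| + |c₃|) * ‖f x‖ + |c₂| * (‖x‖ * ‖f x‖) := by ring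

variable {σ : ℝ}

lemma tendsto_right (hσ : 0 < σ) (c₁ c₂ c₃ : ℝ) (f : SchwartzMap ℝ ℝ) :
    Tendsto (fun x => (c₁ * Real.exp (-σ * x) + (c₂ * x + c₃)) * f x) atTop (𝓝 0) := by
  have hle : atTop ≤ cocompact ℝ := by
    rw [cocompact_eq_atBot_atTop]; exact le_sup_right
  have hf : Tendsto (fun x => f x) atTop (𝓝 0) := (tendsto_cocompact f).mono_left hle
  have hxf : Tendsto (fun x => x * f x) atTop (𝓝 0) := (tendsto_id_mul f).mono_left hle
  have hexp : Tendsto (fun x : ℝ => Real.exp (-σ * x)) atTop (𝓝 0) := by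
    apply Real.tendsto_exp_atBot.comp
    have h : Tendsto (fun x : ℝ => σ * x) atTop atTop :=
      Tendsto.const_mul_atTop hσ tendsto_id
    exact (tendsto_neg_atTop_atBot.comp h).congr (fun x => by simp [Function.comp])
  have h := ((hexp.mul hf).const_mul c₁).add ((hxf.const_mul c₂).add (hf.const_mul c₃))
  simp only [mul_zero, add_zero] at h
  exact h.congr (fun x => by ring)

lemma tendsto_left (hσ : 0 < σ) (c₁ c₂ c₃ : ℝ) (f : SchwartzMap ℝ ℝ) :
    Tendsto (fun x => (c₁ * Real.exp (σ * x) + (c₂ * x + c₃)) * f x) atBot (𝓝 0) := by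
  have hle : atBot ≤ cocompact ℝ := by
    rw [cocompact_eq_atBot_atTop]; exact le_sup_left
  have hf : Tendsto (fun x => f x) atBot (𝓝 0) := (tendsto_cocompact f).mono_left hle
  have hxf : Tendsto (fun x => x * f x) atBot (𝓝 0) := (tendsto_id_mul f).mono_left hle
  have hexp : Tendsto (fun x : ℝ => Real.exp (σ * x)) atBot (𝓝 0) := by
    apply Real.tendsto_exp_atBot.comp
    exact Tendsto.const_mul_atBot hσ tendsto_id
  have h := ((hexp.mul hf).const_mul c₁).add ((hxf.const_mul c₂).add (hf.const_mul c₃))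
  simp only [mul_zero, add_zero] at h
  exact h.congr (fun x => by ring)

lemma cont_aux (d c₁ c₂ c₃ : ℝ) : Continuous (fun x : ℝ =>
    c₁ * Real.exp (d * x) + (c₂ * x + c₃)) :=
  (continuous_const.mul (Real.continuous_exp.comp (continuous_const.mul
    continuous_id))).add ((continuous_const.mul continuous_id).add continuous_const)

lemma hasDerivAt_aux (d c₁ c₂ c₃ : ℝ) (x : ℝ) :
    HasDerivAt (fun x : ℝ => c₁ * Real.exp (d * x) + (c₂ * x + c₃))
      (d * c₁ * Real.exp (d * x) + (0 * x + c₂)) x := by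
  have h1 : HasDerivAt (fun x : ℝ => d * x) d x := by
    simpa using (hasDerivAt_id x).const_mul d
  have h2 : HasDerivAt (fun x : ℝ => Real.exp (d * x)) (Real.exp (d * x) * d) x :=
    (Real.hasDerivAt_exp (d * x)).comp x h1
  have h3 := (h2.const_mul c₁).add (((hasDerivAt_id x).const_mul c₂).add_const c₃)
  rw [show d * c₁ * Real.exp (d * x) + (0 * x + c₂) = c₁ * (Real.exp (d * x) * d) + c₂ * 1 by ring]
  exact h3

lemma ibp_right (hσ : 0 < σ) (c₁ c₂ c₃ : ℝ) (f : SchwartzMap ℝ ℝ) :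
    ∫ x in Ioi (0:ℝ), (c₁ * Real.exp (-σ * x) + (c₂ * x + c₃)) * deriv (⇑f) x
      = -((c₁ + c₃) * f 0)
        - ∫ x in Ioi (0:ℝ), (-σ * c₁ * Real.exp (-σ * x) + (0 * x + c₂)) * f x := by
  have hcoe : (⇑(SchwartzMap.derivCLM ℝ ℝ f) : ℝ → ℝ) = deriv ⇑f :=
    funext fun x => SchwartzMap.derivCLM_apply ℝ f x
  have hd : ∀ x ∈ Ioi (0:ℝ), -σ * x ≤ 0 := by
    intro x hx
    have : (0:ℝ) < x := hx
    nlinarith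
  have hu : ∀ x ∈ Ioi (0:ℝ),
      HasDerivAt (fun x => c₁ * Real.exp (-σ * x) + (c₂ * x + c₃))
        (-σ * c₁ * Real.exp (-σ * x) + (0 * x + c₂)) x :=
    fun x _ => hasDerivAt_aux (-σ) c₁ c₂ c₃ x
  have hv : ∀ x ∈ Ioi (0:ℝ), HasDerivAt (⇑f) (deriv (⇑f) x) x :=
    fun x _ => f.differentiableAt.hasDerivAt
  have huv' : IntegrableOn ((fun x => c₁ * Real.exp (-σ * x) + (c₂ * x + c₃)) *
      (deriv ⇑f)) (Ioi 0) := by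
    rw [← hcoe]
    exact integrableOn_aux (-σ) c₁ c₂ c₃ (SchwartzMap.derivCLM ℝ ℝ f) measurableSet_Ioi hd
  have hu'v : IntegrableOn ((fun x => -σ * c₁ * Real.exp (-σ * x) + (0 * x + c₂)) *
      (⇑f)) (Ioi 0) :=
    integrableOn_aux (-σ) (-σ * c₁) 0 c₂ f measurableSet_Ioi hd
  have h_zero : Tendsto ((fun x => c₁ * Real.exp (-σ * x) + (c₂ * x + c₃)) * (⇑f))
      (𝓝[>] (0:ℝ)) (𝓝 ((c₁ + c₃) * f 0)) := by
    have h0 := ((cont_aux (-σ) c₁ c₂ c₃).mul f.continuous).tendsto 0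
    have he : (c₁ * Real.exp (-σ * 0) + (c₂ * 0 + c₃)) * f 0 = (c₁ + c₃) * f 0 := by
      simp
    rw [← he]
    exact h0.mono_left nhdsWithin_le_nhds
  have h_infty : Tendsto ((fun x => c₁ * Real.exp (-σ * x) + (c₂ * x + c₃)) * (⇑f))
      atTop (𝓝 0) := tendsto_right hσ c₁ c₂ c₃ f
  have := integral_Ioi_mul_deriv_eq_deriv_mul hu hv huv' hu'v h_zero h_infty
  simpa using this

lemma ibp_left (hσ : 0 < σ) (c₁ c₂ c₃ : ℝ) (f : SchwartzMap ℝ ℝ) :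
    ∫ x in Iic (0:ℝ), (c₁ * Real.exp (σ * x) + (c₂ * x + c₃)) * deriv (⇑f) x
      = (c₁ + c₃) * f 0
        - ∫ x in Iic (0:ℝ), (σ * c₁ * Real.exp (σ * x) + (0 * x + c₂)) * f x := by
  have hcoe : (⇑(SchwartzMap.derivCLM ℝ ℝ f) : ℝ → ℝ) = deriv ⇑f :=
    funext fun x => SchwartzMap.derivCLM_apply ℝ f x
  have hd : ∀ x ∈ Iic (0:ℝ), σ * x ≤ 0 := by
    intro x hx
    have : x ≤ 0 := hx
    nlinarith
  have hu : ∀ x ∈ Iio (0:ℝ),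
      HasDerivAt (fun x => c₁ * Real.exp (σ * x) + (c₂ * x + c₃))
        (σ * c₁ * Real.exp (σ * x) + (0 * x + c₂)) x :=
    fun x _ => hasDerivAt_aux σ c₁ c₂ c₃ x
  have hv : ∀ x ∈ Iio (0:ℝ), HasDerivAt (⇑f) (deriv (⇑f) x) x :=
    fun x _ => f.differentiableAt.hasDerivAt
  have huv' : IntegrableOn ((fun x => c₁ * Real.exp (σ * x) + (c₂ * x + c₃)) *
      (deriv ⇑f)) (Iic 0) := by
    rw [← hcoe]
    exact integrableOn_aux σ c₁ c₂ c₃ (SchwartzMap.derivCLM ℝ ℝ f) measurableSet_Iic hd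
  have hu'v : IntegrableOn ((fun x => σ * c₁ * Real.exp (σ * x) + (0 * x + c₂)) *
      (⇑f)) (Iic 0) :=
    integrableOn_aux σ (σ * c₁) 0 c₂ f measurableSet_Iic hd
  have h_zero : Tendsto ((fun x => c₁ * Real.exp (σ * x) + (c₂ * x + c₃)) * (⇑f))
      (𝓝[<] (0:ℝ)) (𝓝 ((c₁ + c₃) * f 0)) := by
    have h0 := ((cont_aux σ c₁ c₂ c₃).mul f.continuous).tendsto 0
    have he : (c₁ * Real.exp (σ * 0) + (c₂ * 0 + c₃)) * f 0 = (c₁ + c₃) * f 0 := by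
      simp
    rw [← he]
    exact h0.mono_left nhdsWithin_le_nhds
  have h_infty : Tendsto ((fun x => c₁ * Real.exp (σ * x) + (c₂ * x + c₃)) * (⇑f))
      atBot (𝓝 0) := tendsto_left hσ c₁ c₂ c₃ f
  have := integral_Iic_mul_deriv_eq_deriv_mul hu hv huv' hu'v h_zero h_infty
  simpa using this


end TensionAux

open TensionAux

/-- For `σ > 0`, the tension spline function
`G(x) = −(1/(2σ³)) (exp(−σ|x|) + σ|x|)` on `ℝ` satisfies `G'''' − σ²G'' = δ₀`
in the sense of tempered distributions: for every Schwartz function `γ : ℝ → ℝ`,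
`∫ G(x) (γ''''(x) − σ²γ''(x)) dx = γ(0)`. -/
theorem tension_spline_green_function (σ : ℝ) (hσ : 0 < σ) (γ : SchwartzMap ℝ ℝ) :
    ∫ x : ℝ,
      (-(1 / (2 * σ ^ 3)) * (Real.exp (-σ * |x|) + σ * |x|)) *
        ((deriv^[4] (⇑γ)) x - σ ^ 2 * deriv (deriv (⇑γ)) x)
      = γ 0 := by
  set A : ℝ := -(1 / (2 * σ ^ 3)) with hA
  set g1 : SchwartzMap ℝ ℝ := SchwartzMap.derivCLM ℝ ℝ γ with hg1
  set g2 : SchwartzMap ℝ ℝ := SchwartzMap.derivCLM ℝ ℝ g1 with hg2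
  set g3 : SchwartzMap ℝ ℝ := SchwartzMap.derivCLM ℝ ℝ g2 with hg3
  set g4 : SchwartzMap ℝ ℝ := SchwartzMap.derivCLM ℝ ℝ g3 with hg4
  have hc1 : (⇑g1 : ℝ → ℝ) = deriv ⇑γ := funext fun x => SchwartzMap.derivCLM_apply ℝ γ x
  have hc2 : (⇑g2 : ℝ → ℝ) = deriv (deriv ⇑γ) := by
    rw [hg2]
    rw [funext fun x => SchwartzMap.derivCLM_apply ℝ g1 x, hc1]
  have hc3 : (⇑g3 : ℝ → ℝ) = deriv (deriv (deriv ⇑γ)) := by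
    rw [hg3]
    rw [funext fun x => SchwartzMap.derivCLM_apply ℝ g2 x, hc2]
  have hc4 : (⇑g4 : ℝ → ℝ) = deriv (deriv (deriv (deriv ⇑γ))) := by
    rw [hg4]
    rw [funext fun x => SchwartzMap.derivCLM_apply ℝ g3 x, hc3]
  have h4 : deriv^[4] (⇑γ) = deriv (deriv (deriv (deriv (⇑γ)))) := rfl
  rw [h4]
  have hdR : ∀ x ∈ Ioi (0:ℝ), -σ * x ≤ 0 := by
    intro x hx
    have hx' : (0:ℝ) < x := hx
    nlinarith
  have hdL : ∀ x ∈ Iic (0:ℝ), σ * x ≤ 0 := by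
    intro x hx
    have hx' : x ≤ 0 := hx
    nlinarith
  -- the Schwartz combination
  set Ψ : SchwartzMap ℝ ℝ := g4 - σ ^ 2 • g2 with hΨdef
  have hΨ : ∀ x, Ψ x = deriv (deriv (deriv (deriv ⇑γ))) x - σ ^ 2 * deriv (deriv ⇑γ) x := by
    intro x
    rw [hΨdef]
    simp only [SchwartzMap.sub_apply, SchwartzMap.smul_apply, smul_eq_mul, hc4, hc2]
  -- integrability of the original integrand on each half line
  have hIR : IntegrableOn (fun x : ℝ =>
      (A * (Real.exp (-σ * |x|) + σ * |x|)) *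
        ((deriv (deriv (deriv (deriv (⇑γ))))) x - σ ^ 2 * deriv (deriv (⇑γ)) x)) (Ioi 0) := by
    apply (integrableOn_aux (-σ) A (A * σ) 0 Ψ measurableSet_Ioi hdR).congr_fun _
      measurableSet_Ioi
    intro x hx
    simp only [hΨ, abs_of_pos (mem_Ioi.mp hx)]
    ring
  have hIL : IntegrableOn (fun x : ℝ =>
      (A * (Real.exp (-σ * |x|) + σ * |x|)) *
        ((deriv (deriv (deriv (deriv (⇑γ))))) x - σ ^ 2 * deriv (deriv (⇑γ)) x)) (Iic 0) := by
    apply (integrableOn_aux σ A (-(A * σ)) 0 Ψ measurableSet_Iic hdL).congr_fun _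
      measurableSet_Iic
    intro x hx
    simp only [hΨ, abs_of_nonpos (mem_Iic.mp hx)]
    rw [show -σ * -x = σ * x by ring]
    ring
  rw [← intervalIntegral.integral_Iic_add_Ioi hIL hIR]
  -- split each half into the two derivative pieces
  have hI1R : IntegrableOn (fun x : ℝ =>
      (A * Real.exp (-σ * x) + (A * σ * x + 0)) * deriv (deriv (deriv (deriv (⇑γ)))) x)
      (Ioi 0) := by
    have h := integrableOn_aux (-σ) A (A * σ) 0 g4 measurableSet_Ioi hdR
    rwa [hc4] at h
  have hI2R : IntegrableOn (fun x : ℝ =>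
      σ ^ 2 * ((A * Real.exp (-σ * x) + (A * σ * x + 0)) * deriv (deriv (⇑γ)) x))
      (Ioi 0) := by
    have h := integrableOn_aux (-σ) A (A * σ) 0 g2 measurableSet_Ioi hdR
    rw [hc2] at h
    exact h.const_mul _
  have hsplitR : (∫ x in Ioi (0:ℝ),
      (A * (Real.exp (-σ * |x|) + σ * |x|)) *
        ((deriv (deriv (deriv (deriv (⇑γ))))) x - σ ^ 2 * deriv (deriv (⇑γ)) x))
      = (∫ x in Ioi (0:ℝ),
          (A * Real.exp (-σ * x) + (A * σ * x + 0)) * deriv (deriv (deriv (deriv (⇑γ)))) x)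
        - σ ^ 2 * ∫ x in Ioi (0:ℝ),
            (A * Real.exp (-σ * x) + (A * σ * x + 0)) * deriv (deriv (⇑γ)) x := by
    rw [← integral_const_mul, ← integral_sub hI1R hI2R]
    apply setIntegral_congr_fun measurableSet_Ioi
    intro x hx
    simp only [abs_of_pos (mem_Ioi.mp hx)]
    ring
  have hI1L : IntegrableOn (fun x : ℝ =>
      (A * Real.exp (σ * x) + (-(A * σ) * x + 0)) * deriv (deriv (deriv (deriv (⇑γ)))) x)
      (Iic 0) := by
    have h := integrableOn_aux σ A (-(A * σ)) 0 g4 measurableSet_Iic hdL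
    rwa [hc4] at h
  have hI2L : IntegrableOn (fun x : ℝ =>
      σ ^ 2 * ((A * Real.exp (σ * x) + (-(A * σ) * x + 0)) * deriv (deriv (⇑γ)) x))
      (Iic 0) := by
    have h := integrableOn_aux σ A (-(A * σ)) 0 g2 measurableSet_Iic hdL
    rw [hc2] at h
    exact h.const_mul _
  have hsplitL : (∫ x in Iic (0:ℝ),
      (A * (Real.exp (-σ * |x|) + σ * |x|)) *
        ((deriv (deriv (deriv (deriv (⇑γ))))) x - σ ^ 2 * deriv (deriv (⇑γ)) x))
      = (∫ x in Iic (0:ℝ),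
          (A * Real.exp (σ * x) + (-(A * σ) * x + 0)) * deriv (deriv (deriv (deriv (⇑γ)))) x)
        - σ ^ 2 * ∫ x in Iic (0:ℝ),
            (A * Real.exp (σ * x) + (-(A * σ) * x + 0)) * deriv (deriv (⇑γ)) x := by
    rw [← integral_const_mul, ← integral_sub hI1L hI2L]
    apply setIntegral_congr_fun measurableSet_Iic
    intro x hx
    simp only [abs_of_nonpos (mem_Iic.mp hx)]
    rw [show -σ * -x = σ * x by ring]
    ring
  -- integration by parts chains, right side
  have eqR1 := ibp_right hσ A (A * σ) 0 g3
  have eqR2 := ibp_right hσ (-σ * A) 0 (A * σ) g2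
  have eqR3 := ibp_right hσ (-σ * (-σ * A)) 0 0 g1
  have eqR4 := ibp_right hσ (-σ * (-σ * (-σ * A))) 0 0 γ
  have eqR5 := ibp_right hσ A (A * σ) 0 g1
  have eqR6 := ibp_right hσ (-σ * A) 0 (A * σ) γ
  simp only [hc1, hc2, hc3] at eqR1 eqR2 eqR3 eqR4 eqR5 eqR6
  have hTR : (∫ x in Ioi (0:ℝ),
        (-σ * (-σ * (-σ * (-σ * A))) * Real.exp (-σ * x) + (0 * x + 0)) * γ x)
      = σ ^ 2 * ∫ x in Ioi (0:ℝ),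
        (-σ * (-σ * A) * Real.exp (-σ * x) + (0 * x + 0)) * γ x := by
    rw [← integral_const_mul]
    apply setIntegral_congr_fun measurableSet_Ioi
    intro x _
    ring
  rw [hTR] at eqR4
  rw [eqR4] at eqR3
  rw [eqR3] at eqR2
  rw [eqR2] at eqR1
  rw [eqR6] at eqR5
  -- integration by parts chains, left side
  have eqL1 := ibp_left hσ A (-(A * σ)) 0 g3
  have eqL2 := ibp_left hσ (σ * A) 0 (-(A * σ)) g2
  have eqL3 := ibp_left hσ (σ * (σ * A)) 0 0 g1
  have eqL4 := ibp_left hσ (σ * (σ * (σ * A))) 0 0 γ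
  have eqL5 := ibp_left hσ A (-(A * σ)) 0 g1
  have eqL6 := ibp_left hσ (σ * A) 0 (-(A * σ)) γ
  simp only [hc1, hc2, hc3] at eqL1 eqL2 eqL3 eqL4 eqL5 eqL6
  have hTL : (∫ x in Iic (0:ℝ),
        (σ * (σ * (σ * (σ * A))) * Real.exp (σ * x) + (0 * x + 0)) * γ x)
      = σ ^ 2 * ∫ x in Iic (0:ℝ),
        (σ * (σ * A) * Real.exp (σ * x) + (0 * x + 0)) * γ x := by
    rw [← integral_const_mul]
    apply setIntegral_congr_fun measurableSet_Iic
    intro x _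
    ring
  rw [hTL] at eqL4
  rw [eqL4] at eqL3
  rw [eqL3] at eqL2
  rw [eqL2] at eqL1
  rw [eqL6] at eqL5
  rw [hsplitR, hsplitL, eqR1, eqR5, eqL1, eqL5]
  rw [hA]
  field_simp
  ring
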